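/- The direct sum of two discrete midpoint convex sets need not be discrete midpoint convex: for S₁ = {(1,0),(0,1)} ⊆ ℤ² and S₂ = ℤ, the set S₁ ⊕ S₂ = {(1,0,t),(0,1,t) : t ∈ ℤ} is not discrete midpoint convex. -/

import Mathlib

/-- A nonempty set `S ⊆ ℤⁿ` is discrete midpoint convex if for all `x, y ∈ S` with
`‖x − y‖_∞ ≥ 2` (i.e. some component differs by at least 2), both the componentwise
rounded-up and rounded-down midpoints belong to `S`. -/
def DiscreteMidpointConvex {n : ℕ} (S : Set (Fin n → ℤ)) : Prop :=
  S.Nonempty ∧ ∀ x ∈ S, ∀ y ∈ S, (∃ i, 2 ≤ |x i - y i|) →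
    (fun i => ⌈((x i + y i : ℤ) : ℚ) / 2⌉) ∈ S ∧ (fun i => ⌊((x i + y i : ℤ) : ℚ) / 2⌋) ∈ S

/-- The direct sum `S₁ ⊕ S₂ = {(1,0,t),(0,1,t) : t ∈ ℤ}` of the discrete midpoint convex
sets `S₁ = {(1,0),(0,1)}` and `S₂ = ℤ` is not discrete midpoint convex. -/
theorem directSum_not_dmc :
    DiscreteMidpointConvex ({![1,0], ![0,1]} : Set (Fin 2 → ℤ)) ∧
    DiscreteMidpointConvex (Set.univ : Set (Fin 1 → ℤ)) ∧
    ¬ DiscreteMidpointConvex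
        {z : Fin 3 → ℤ | (z 0 = 1 ∧ z 1 = 0) ∨ (z 0 = 0 ∧ z 1 = 1)} := by
  refine ⟨⟨⟨![1,0], by simp⟩, ?_⟩, ⟨⟨fun _ => 0, trivial⟩, fun _ _ _ _ _ => ⟨trivial, trivial⟩⟩, ?_⟩
  · rintro x hx y hy ⟨i, hi⟩
    exfalso
    rcases hx with rfl | rfl <;> rcases hy with rfl | rfl <;> fin_cases i <;> simp_all
  · rintro ⟨-, h⟩
    have hx : (![1,0,0] : Fin 3 → ℤ) ∈ {z : Fin 3 → ℤ | (z 0 = 1 ∧ z 1 = 0) ∨ (z 0 = 0 ∧ z 1 = 1)} := by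
      left; simp
    have hy : (![0,1,2] : Fin 3 → ℤ) ∈ {z : Fin 3 → ℤ | (z 0 = 1 ∧ z 1 = 0) ∨ (z 0 = 0 ∧ z 1 = 1)} := by
      right; simp
    have := (h _ hx _ hy ⟨2, by decide⟩).1
    rcases this with ⟨h0, h1⟩ | ⟨h0, h1⟩ <;> simp at h0 h1 <;> norm_num at *
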